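/- arXiv:2004.07247 — 3 statements merged into one kernel-verified Lean document; each statement's English description precedes it below -/
import Mathlib

section
/- (Support property of the sweep rule) Let σ(1) = σ be an initial syndrome in a causal code, and at each time step define σ(T+1) = σ(T) + Σ_{u trailing} ∂φ(u), where for each trailing location u the returned qubit set φ(u) satisfies ◊(∂φ(u)) = ◊(σ(T)|_u). Then for all T, σ(T) ⊆ ◊(σ), i.e., every location appearing in σ(T) lies in the causal diamond of the original syndrome. -/
open scoped symmDiff

/-- support property of the sweep rule: let `D` be the causal diamond
operator of a causal code, satisfying `U ⊆ D U`, monotonicity, and the property that a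
union of sets whose diamonds lie in `D C` has its diamond in `D C`. If the syndrome
is updated at each step by adding (symmetric difference) boundaries `∂φ(u)` of returned
qubit sets whose causal diamonds equal the diamonds of the restrictions
`σ(T)|_u ⊆ σ(T)` (hence lie in `D (σ T)`), then `σ T ⊆ D (σ 1)` for all `T ≥ 1`. -/
theorem sweep_support {V : Type*} (D : Set V → Set V)
    (hsub : ∀ U : Set V, U ⊆ D U)
    (hmono : ∀ U W : Set V, U ⊆ W → D U ⊆ D W)
    (hunion : ∀ (ι : Type) (s : ι → Set V) (C : Set V),
      (∀ i, D (s i) ⊆ D C) → D (⋃ i, s i) ⊆ D C)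
    (σ : ℕ → Set V)
    (hstep : ∀ T, 1 ≤ T → ∃ (ι : Type) (φbnd : ι → Set V),
      (∀ u : ι, D (φbnd u) ⊆ D (σ T)) ∧
      σ (T + 1) = σ T ∆ (⋃ u, φbnd u)) :
    ∀ T, 1 ≤ T → σ T ⊆ D (σ 1) := by
  have key : ∀ T, 1 ≤ T → D (σ T) ⊆ D (σ 1) := by
    intro T hT
    induction T with
    | zero => omega
    | succ T ih =>
      rcases Nat.lt_or_ge T 1 with h | h
      · interval_cases T
        exact le_refl _
      · obtain ⟨ι, φbnd, hφ, heq⟩ := hstep T h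
        have ih' := ih h
        set s : Option ι → Set V := fun o => o.elim (σ T) φbnd with hs
        have hsd : D (⋃ o, s o) ⊆ D (σ 1) := by
          apply hunion
          rintro (_ | u)
          · exact ih'
          · exact (hφ u).trans ih'
        refine (hmono _ _ ?_).trans hsd
        rw [heq]
        intro x hx
        rcases (Set.mem_symmDiff.mp hx) with ⟨hx1, _⟩ | ⟨hx1, _⟩
        · exact Set.mem_iUnion.mpr ⟨none, hx1⟩
        · obtain ⟨u, hu⟩ := Set.mem_iUnion.mp hx1
          exact Set.mem_iUnion.mpr ⟨some u, hu⟩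
  exact fun T hT => (hsub (σ T)).trans (key T hT)
end

section
/- Let Q ≥ 6·|Ω|·c_P·c_D⁸ and suppose M is a Qⁿ-connected component of Fₙ in the chunk decomposition of an error ε. If the sweep rule removes the syndrome of M within |Ω|·c_P·c_D⁸·Qⁿ time steps and the syndrome propagates at most one lattice step per application (propagation ≤ T), then during the removal of M, the syndrome of M never comes within distance Qⁿ⁺¹/3 − c_P c_D⁸ |Ω| Qⁿ > 0 of the syndrome of Eₙ \ M; hence M is corrected independently of the rest of the error. -/
/-- let `M` (a `Qⁿ`-connected component of `Fₙ`) and `B` (the syndrome of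
`Eₙ \ M`) be separated by distance greater than `Qⁿ⁺¹/3`, and let the syndrome `σ` of `M`
propagate at most one lattice step per time step (`d(x, M) ≤ T` for `x ∈ σ T`). If
`Q ≥ 6·|Ω|·c_P·c_D⁸` and the removal time satisfies `T_rem ≤ |Ω|·c_P·c_D⁸·Qⁿ`, then
during removal the syndrome of `M` never comes within distance
`Qⁿ⁺¹/3 − |Ω|·c_P·c_D⁸·Qⁿ > 0` of `B`; hence `M` is corrected independently. -/
theorem independent_correction {X : Type*} [MetricSpace X]
    (nΩ cP cD Q : ℝ) (n : ℕ)
    (hnΩ : 1 ≤ nΩ) (hcP : 1 ≤ cP) (hcD : 1 ≤ cD)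
    (hQ : 6 * nΩ * cP * cD ^ 8 ≤ Q)
    (M B : Set X) (σ : ℕ → Set X) (Trem : ℕ)
    (hTrem : (Trem : ℝ) ≤ nΩ * cP * cD ^ 8 * Q ^ n)
    (hsep : ∀ a ∈ M, ∀ b ∈ B, Q ^ (n + 1) / 3 < dist a b)
    (hprop : ∀ T ≤ Trem, ∀ x ∈ σ T, ∃ a ∈ M, dist x a ≤ (T : ℝ)) :
    0 < Q ^ (n + 1) / 3 - nΩ * cP * cD ^ 8 * Q ^ n ∧
    ∀ T ≤ Trem, ∀ x ∈ σ T, ∀ b ∈ B,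
      Q ^ (n + 1) / 3 - nΩ * cP * cD ^ 8 * Q ^ n < dist x b := by

  have hc : (1:ℝ) ≤ nΩ * cP * cD ^ 8 := by 
    have h8 : (1:ℝ) ≤ cD ^ 8 := one_le_pow₀ hcD
    nlinarith [mul_le_mul hnΩ hcP (by linarith) (by linarith : (0:ℝ) ≤ nΩ)]
  have hQ6 : (6:ℝ) ≤ Q := le_trans (by nlinarith) hQ
  have hQpos : (0:ℝ) < Q := by linarith
  have hQn : (0:ℝ) < Q ^ n := pow_pos hQpos n
  have key : nΩ * cP * cD ^ 8 * Q ^ n < Q ^ (n + 1) / 3 := by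
    have : Q ^ (n + 1) = Q * Q ^ n := by ring
    rw [this]
    nlinarith [mul_le_mul_of_nonneg_right hQ (le_of_lt hQn)]
  refine ⟨by linarith, ?_⟩
  intro T hT x hx b hb
  obtain ⟨a, ha, hxa⟩ := hprop T hT x hx
  have h1 := hsep a ha b hb
  have h2 : dist a b ≤ dist a x + dist x b := dist_triangle a x b
  have h3 : dist a x = dist x a := dist_comm a x
  have hT' : (T : ℝ) ≤ nΩ * cP * cD ^ 8 * Q ^ n :=
    le_trans (Nat.cast_le.mpr hT) hTrem
  linarith
end

section
/- In the rhombic dodecahedral lattice with sweep direction ω = (1,1,1), every face (rhombus) f, regarded as its set of four vertices with the induced partial order, contains its infimum: there is a unique vertex v ∈ f with v ≼ u for all u ∈ f. -/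
/-- Vertices of the rhombic dodecahedral lattice, with all coordinates scaled by 2:
cubic vertices (all coordinates even) and cube centers (all coordinates odd with
coordinate sum ≡ 1 mod 4, i.e. centers of half the cubes). -/
def RDVertex (p : Fin 3 → ℤ) : Prop :=
  (∀ i, Even (p i)) ∨ ((∀ i, Odd (p i)) ∧ (p 0 + p 1 + p 2) % 4 = 1)

/-- Edges of the rhombic dodecahedral lattice: a cube center is joined to the eight
corners of its cube, i.e. two vertices are adjacent iff they differ by exactly 1 in
every coordinate (in the scaled coordinates). -/
def RDAdj (p q : Fin 3 → ℤ) : Prop :=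
  RDVertex p ∧ RDVertex q ∧ ∀ i, |p i - q i| = 1

/-- One step of the partial order induced by the sweep direction `ω = (1,1,1)`:
an edge whose inner product with `ω` is positive. -/
def RDStep (p q : Fin 3 → ℤ) : Prop :=
  RDAdj p q ∧ 0 < (q 0 - p 0) + (q 1 - p 1) + (q 2 - p 2)

/-- The induced partial order: `u ≼ v` iff there is a causal path of edges from `u` to
`v`, each edge having positive inner product with `ω = (1,1,1)`. -/
def RDLe (p q : Fin 3 → ℤ) : Prop := Relation.ReflTransGen RDStep p q

lemma RDAdj.symm' {p q : Fin 3 → ℤ} (h : RDAdj p q) : RDAdj q p :=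
  ⟨h.2.1, h.1, fun i => by rw [abs_sub_comm]; exact h.2.2 i⟩

lemma adj_diff {p q : Fin 3 → ℤ} (h : RDAdj p q) (i : Fin 3) :
    p i - q i = 1 ∨ p i - q i = -1 :=
  (abs_eq (by norm_num : (0:ℤ) ≤ 1)).mp (h.2.2 i)

lemma adj_sum_ne {p q : Fin 3 → ℤ} (h : RDAdj p q) :
    (q 0 - p 0) + (q 1 - p 1) + (q 2 - p 2) ≠ 0 := by
  rcases adj_diff h 0 with h0 | h0 <;> rcases adj_diff h 1 with h1 | h1 <;>
    rcases adj_diff h 2 with h2 | h2 <;> omega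

lemma adj_even_odd {p q : Fin 3 → ℤ} (h : RDAdj p q) (hp : ∀ i, Even (p i)) :
    (∀ i, Odd (q i)) ∧ (q 0 + q 1 + q 2) % 4 = 1 := by
  rcases h.2.1 with hq | hq
  · exfalso
    have h0 := Int.even_iff.mp (hp 0)
    have h1 := Int.even_iff.mp (hq 0)
    rcases adj_diff h 0 with h2 | h2 <;> omega
  · exact hq

lemma adj_odd_even {p q : Fin 3 → ℤ} (h : RDAdj p q) (hp : ∀ i, Odd (p i)) :
    ∀ i, Even (q i) := by
  rcases h.2.1 with hq | hq
  · exact hq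
  · exfalso
    have h0 := Int.odd_iff.mp (hp 0)
    have h1 := Int.odd_iff.mp (hq.1 0)
    rcases adj_diff h 0 with h2 | h2 <;> omega

lemma rdle_sum {p q : Fin 3 → ℤ} (h : RDLe p q) :
    p 0 + p 1 + p 2 ≤ q 0 + q 1 + q 2 := by
  induction h with
  | refl => exact le_refl _
  | tail _ hstep ih => have := hstep.2; omega

lemma rdle_antisymm {p q : Fin 3 → ℤ} (h1 : RDLe p q) (h2 : RDLe q p) : p = q := by
  rcases h1.cases_head with rfl | ⟨m, hstep, hmq⟩
  · rfl
  · exfalso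
    have h3 := rdle_sum hmq
    have h4 := rdle_sum h2
    have := hstep.2
    omega

set_option maxHeartbeats 2000000 in
lemma rhombus_scalar (a0 a1 a2 b0 b1 b2 c0 c1 c2 d0 d1 d2 : ℤ)
    (A0 : a0 % 2 = 0) (A1 : a1 % 2 = 0) (A2 : a2 % 2 = 0)
    (B0 : b0 % 2 = 1) (B1 : b1 % 2 = 1) (B2 : b2 % 2 = 1)
    (C0 : c0 % 2 = 0) (C1 : c1 % 2 = 0) (C2 : c2 % 2 = 0)
    (D0 : d0 % 2 = 1) (D1 : d1 % 2 = 1) (D2 : d2 % 2 = 1)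
    (hb4 : (b0 + b1 + b2) % 4 = 1) (hd4 : (d0 + d1 + d2) % 4 = 1)
    (E10 : -1 ≤ a0 - b0 ∧ a0 - b0 ≤ 1) (E11 : -1 ≤ a1 - b1 ∧ a1 - b1 ≤ 1)
    (E12 : -1 ≤ a2 - b2 ∧ a2 - b2 ≤ 1)
    (E20 : -1 ≤ b0 - c0 ∧ b0 - c0 ≤ 1) (E21 : -1 ≤ b1 - c1 ∧ b1 - c1 ≤ 1)
    (E22 : -1 ≤ b2 - c2 ∧ b2 - c2 ≤ 1)
    (E30 : -1 ≤ c0 - d0 ∧ c0 - d0 ≤ 1) (E31 : -1 ≤ c1 - d1 ∧ c1 - d1 ≤ 1)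
    (E32 : -1 ≤ c2 - d2 ∧ c2 - d2 ≤ 1)
    (E40 : -1 ≤ d0 - a0 ∧ d0 - a0 ≤ 1) (E41 : -1 ≤ d1 - a1 ∧ d1 - a1 ≤ 1)
    (E42 : -1 ≤ d2 - a2 ∧ d2 - a2 ≤ 1)
    (hac : a0 ≠ c0 ∨ a1 ≠ c1 ∨ a2 ≠ c2) (hbd : b0 ≠ d0 ∨ b1 ≠ d1 ∨ b2 ≠ d2) :
    a0 + c0 = b0 + d0 ∧ a1 + c1 = b1 + d1 ∧ a2 + c2 = b2 + d2 := by
  omega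

lemma rhombus_core (a b c d : Fin 3 → ℤ)
    (hac : a ≠ c) (hbd : b ≠ d)
    (h₁ : RDAdj a b) (h₂ : RDAdj b c) (h₃ : RDAdj c d) (h₄ : RDAdj d a)
    (ha : ∀ i, Even (a i)) :
    ∀ i, a i + c i = b i + d i := by
  obtain ⟨hb, hb4⟩ := adj_even_odd h₁ ha
  have hcE : ∀ i, Even (c i) := adj_odd_even h₂ hb
  obtain ⟨hd, hd4⟩ := adj_even_odd h₃ hcE
  have hacs : a 0 ≠ c 0 ∨ a 1 ≠ c 1 ∨ a 2 ≠ c 2 := by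
    obtain ⟨i, hi⟩ := Function.ne_iff.mp hac
    fin_cases i
    exacts [Or.inl hi, Or.inr (Or.inl hi), Or.inr (Or.inr hi)]
  have hbds : b 0 ≠ d 0 ∨ b 1 ≠ d 1 ∨ b 2 ≠ d 2 := by
    obtain ⟨i, hi⟩ := Function.ne_iff.mp hbd
    fin_cases i
    exacts [Or.inl hi, Or.inr (Or.inl hi), Or.inr (Or.inr hi)]
  have bnd : ∀ {p q : Fin 3 → ℤ}, RDAdj p q → ∀ i : Fin 3,
      -1 ≤ p i - q i ∧ p i - q i ≤ 1 := by
    intro p q h i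
    rcases adj_diff h i with h' | h' <;> omega
  have key := rhombus_scalar (a 0) (a 1) (a 2) (b 0) (b 1) (b 2) (c 0) (c 1) (c 2)
    (d 0) (d 1) (d 2)
    (Int.even_iff.mp (ha 0)) (Int.even_iff.mp (ha 1)) (Int.even_iff.mp (ha 2))
    (Int.odd_iff.mp (hb 0)) (Int.odd_iff.mp (hb 1)) (Int.odd_iff.mp (hb 2))
    (Int.even_iff.mp (hcE 0)) (Int.even_iff.mp (hcE 1)) (Int.even_iff.mp (hcE 2))
    (Int.odd_iff.mp (hd 0)) (Int.odd_iff.mp (hd 1)) (Int.odd_iff.mp (hd 2))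
    hb4 hd4
    (bnd h₁ 0) (bnd h₁ 1) (bnd h₁ 2)
    (bnd h₂ 0) (bnd h₂ 1) (bnd h₂ 2)
    (bnd h₃ 0) (bnd h₃ 1) (bnd h₃ 2)
    (bnd h₄ 0) (bnd h₄ 1) (bnd h₄ 2)
    hacs hbds
  intro i
  fin_cases i
  · exact key.1
  · exact key.2.1
  · exact key.2.2

lemma rhombus_sum (a b c d : Fin 3 → ℤ)
    (hac : a ≠ c) (hbd : b ≠ d)
    (h₁ : RDAdj a b) (h₂ : RDAdj b c) (h₃ : RDAdj c d) (h₄ : RDAdj d a) :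
    ∀ i, a i + c i = b i + d i := by
  rcases h₁.1 with ha | ha
  · exact rhombus_core a b c d hac hbd h₁ h₂ h₃ h₄ ha
  · have hbE : ∀ i, Even (b i) := adj_odd_even h₁ ha.1
    have h := rhombus_core b c d a hbd hac.symm h₂ h₃ h₄ h₁ hbE
    intro i
    have := h i
    omega

/-- every face (rhombus, i.e. a 4-cycle of the lattice) contains its
infimum: among its four vertices there is a unique one below all the others in the
partial order induced by `ω = (1,1,1)`. -/
theorem face_contains_infimum (a b c d : Fin 3 → ℤ)
    (hab : a ≠ b) (hac : a ≠ c) (had : a ≠ d) (hbc : b ≠ c) (hbd : b ≠ d) (hcd : c ≠ d)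
    (h₁ : RDAdj a b) (h₂ : RDAdj b c) (h₃ : RDAdj c d) (h₄ : RDAdj d a) :
    ∃! v, v ∈ ({a, b, c, d} : Set (Fin 3 → ℤ)) ∧
      ∀ u ∈ ({a, b, c, d} : Set (Fin 3 → ℤ)), RDLe v u := by
  have hsum := rhombus_sum a b c d hac hbd h₁ h₂ h₃ h₄
  have k0 := hsum 0; have k1 := hsum 1; have k2 := hsum 2
  have hs := adj_sum_ne h₁   -- Σ(b - a) ≠ 0
  have ht := adj_sum_ne h₂   -- Σ(c - b) ≠ 0
  suffices h : ∃ v ∈ ({a, b, c, d} : Set (Fin 3 → ℤ)),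
      ∀ u ∈ ({a, b, c, d} : Set (Fin 3 → ℤ)), RDLe v u by
    obtain ⟨v, hv, hmin⟩ := h
    refine ⟨v, ⟨hv, hmin⟩, ?_⟩
    rintro w ⟨hw, hwmin⟩
    exact rdle_antisymm (hwmin v hv) (hmin w hw)
  have mema : a ∈ ({a, b, c, d} : Set (Fin 3 → ℤ)) := by simp
  have memb : b ∈ ({a, b, c, d} : Set (Fin 3 → ℤ)) := by simp
  have memc : c ∈ ({a, b, c, d} : Set (Fin 3 → ℤ)) := by simp
  have memd : d ∈ ({a, b, c, d} : Set (Fin 3 → ℤ)) := by simp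
  rcases hs.lt_or_gt with hs' | hs' <;> rcases ht.lt_or_gt with ht' | ht'
  -- hs' : Σ(b-a) < 0 or 0 < Σ(b-a) ; ht' similarly for Σ(c-b)
  · -- s < 0, t < 0 : minimum is c
    refine ⟨c, memc, ?_⟩
    intro u hu
    have stepCB : RDStep c b := ⟨h₂.symm', by omega⟩
    have stepBA : RDStep b a := ⟨h₁.symm', by omega⟩
    have stepCD : RDStep c d := ⟨h₃, by omega⟩
    simp only [Set.mem_insert_iff, Set.mem_singleton_iff] at hu
    rcases hu with rfl | rfl | rfl | rfl
    · exact (Relation.ReflTransGen.single stepCB).tail stepBA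
    · exact Relation.ReflTransGen.single stepCB
    · exact Relation.ReflTransGen.refl
    · exact Relation.ReflTransGen.single stepCD
  · -- s < 0, t > 0 : minimum is b
    refine ⟨b, memb, ?_⟩
    intro u hu
    have stepBA : RDStep b a := ⟨h₁.symm', by omega⟩
    have stepBC : RDStep b c := ⟨h₂, by omega⟩
    have stepCD : RDStep c d := ⟨h₃, by omega⟩
    simp only [Set.mem_insert_iff, Set.mem_singleton_iff] at hu
    rcases hu with rfl | rfl | rfl | rfl
    · exact Relation.ReflTransGen.single stepBA
    · exact Relation.ReflTransGen.refl
    · exact Relation.ReflTransGen.single stepBC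
    · exact (Relation.ReflTransGen.single stepBC).tail stepCD
  · -- s > 0, t < 0 : minimum is d
    refine ⟨d, memd, ?_⟩
    intro u hu
    have stepDA : RDStep d a := ⟨h₄, by omega⟩
    have stepAB : RDStep a b := ⟨h₁, by omega⟩
    have stepDC : RDStep d c := ⟨h₃.symm', by omega⟩
    simp only [Set.mem_insert_iff, Set.mem_singleton_iff] at hu
    rcases hu with rfl | rfl | rfl | rfl
    · exact Relation.ReflTransGen.single stepDA
    · exact (Relation.ReflTransGen.single stepDA).tail stepAB
    · exact Relation.ReflTransGen.single stepDC
    · exact Relation.ReflTransGen.refl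
  · -- s > 0, t > 0 : minimum is a
    refine ⟨a, mema, ?_⟩
    intro u hu
    have stepAB : RDStep a b := ⟨h₁, by omega⟩
    have stepBC : RDStep b c := ⟨h₂, by omega⟩
    have stepAD : RDStep a d := ⟨h₄.symm', by omega⟩
    simp only [Set.mem_insert_iff, Set.mem_singleton_iff] at hu
    rcases hu with rfl | rfl | rfl | rfl
    · exact Relation.ReflTransGen.refl
    · exact Relation.ReflTransGen.single stepAB
    · exact (Relation.ReflTransGen.single stepAB).tail stepBC
    · exact Relation.ReflTransGen.single stepAD
end
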